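/- arXiv:1708.08831 — 3 statements merged into one kernel-verified Lean document; each statement's English description precedes it below -/
import Mathlib

section
/- For the classical secretary problem with T candidates arriving in uniformly random order, the strategy that rejects the first k candidates and then accepts the first candidate better than all previous ones wins (selects the overall best candidate) with probability (k/T) * \sum_{m=k+1}^{T} 1/(m-1). -/
open Finset
open scoped Classical

namespace Sec
variable {T : ℕ}

/-- Permutations with the maximum value `top` at position `m` and prefix argmax at `p`. -/
noncomputable def B (top m p : Fin T) : Finset (Equiv.Perm (Fin T)) :=
  univ.filter (fun σ => σ m = top ∧ ∀ j, j < m → j ≠ p → σ j < σ p)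

lemma fiber_card_eq (m : Fin T) (v v' : Fin T) :
    (univ.filter (fun σ : Equiv.Perm (Fin T) => σ m = v)).card
      = (univ.filter (fun σ : Equiv.Perm (Fin T) => σ m = v')).card := by
  apply Finset.card_bij' (fun σ _ => Equiv.swap v v' * σ) (fun σ _ => Equiv.swap v v' * σ)
  · intro σ hσ
    simp only [mem_filter, mem_univ, true_and] at hσ ⊢
    simp [hσ, Equiv.swap_apply_left]
  · intro σ hσ
    simp only [mem_filter, mem_univ, true_and] at hσ ⊢
    simp [hσ, Equiv.swap_apply_right]
  · intro σ _; simp [← mul_assoc]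
  · intro σ _; simp [← mul_assoc]

lemma fiber_card (m v : Fin T) :
    (univ.filter (fun σ : Equiv.Perm (Fin T) => σ m = v)).card = (T - 1).factorial := by
  have hT : 0 < T := m.pos
  have hsum : (Fintype.card (Equiv.Perm (Fin T)))
      = ∑ w : Fin T, (univ.filter (fun σ : Equiv.Perm (Fin T) => σ m = w)).card := by
    rw [← Finset.card_univ]
    exact Finset.card_eq_sum_card_fiberwise (fun σ _ => mem_univ (σ m))
  have hconst : ∀ w : Fin T,
      (univ.filter (fun σ : Equiv.Perm (Fin T) => σ m = w)).card
        = (univ.filter (fun σ : Equiv.Perm (Fin T) => σ m = v)).card :=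
    fun w => fiber_card_eq m w v
  rw [Finset.sum_congr rfl (fun w _ => hconst w), Finset.sum_const, Finset.card_univ,
    Fintype.card_fin, smul_eq_mul] at hsum
  have hfact : Fintype.card (Equiv.Perm (Fin T)) = T.factorial := by
    simp [Fintype.card_perm]
  rw [hfact] at hsum
  have : T * (T - 1).factorial = T.factorial := by
    cases T with
    | zero => omega
    | succ n => simp [Nat.factorial_succ]
  exact (Nat.eq_of_mul_eq_mul_left hT (by rw [this, hsum])).symm

lemma exists_argmax (σ : Equiv.Perm (Fin T)) (m : Fin T) (hm : 0 < (m : ℕ)) :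
    ∃ p, p < m ∧ ∀ j, j < m → j ≠ p → σ j < σ p := by
  have hne : (Finset.Iio m).Nonempty := ⟨⟨0, m.pos⟩, by simp [Fin.lt_def, hm]⟩
  obtain ⟨p, hp, hmax⟩ := Finset.exists_max_image (Finset.Iio m) σ hne
  refine ⟨p, Finset.mem_Iio.mp hp, fun j hj hjp => ?_⟩
  have := hmax j (Finset.mem_Iio.mpr hj)
  exact lt_of_le_of_ne this (fun h => hjp (σ.injective h))

lemma argmax_unique {σ : Equiv.Perm (Fin T)} {m p p' : Fin T}
    (hp : p < m) (hp' : p' < m)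
    (h : ∀ j, j < m → j ≠ p → σ j < σ p) (h' : ∀ j, j < m → j ≠ p' → σ j < σ p') :
    p = p' := by
  by_contra hne
  exact absurd (h p' hp' (Ne.symm hne)) (not_lt.mpr (le_of_lt (h' p hp hne)))

lemma B_card_eq (top m : Fin T) {p p' : Fin T} (hp : p < m) (hp' : p' < m) :
    (B top m p).card = (B top m p').card := by
  have key : ∀ (q q' : Fin T), q < m → q' < m → ∀ σ : Equiv.Perm (Fin T),
      σ ∈ B top m q → σ * Equiv.swap q q' ∈ B top m q' := by
    intro q q' hq hq' σ hσ
    simp only [B, mem_filter, mem_univ, true_and] at hσ ⊢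
    obtain ⟨htop, hmax⟩ := hσ
    constructor
    · have : Equiv.swap q q' m = m :=
        Equiv.swap_apply_of_ne_of_ne (ne_of_gt hq) (ne_of_gt hq')
      simp [Equiv.Perm.mul_apply, this, htop]
    · intro j hj hjq'
      simp only [Equiv.Perm.mul_apply, Equiv.swap_apply_right]
      rcases eq_or_ne j q with rfl | hjq
      · rw [Equiv.swap_apply_left]
        exact hmax q' hq' (Ne.symm hjq')
      · rw [Equiv.swap_apply_of_ne_of_ne hjq hjq']
        exact hmax j hj hjq
  apply Finset.card_bij' (fun σ _ => σ * Equiv.swap p p') (fun σ _ => σ * Equiv.swap p' p)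
  · exact fun σ hσ => key p p' hp hp' σ hσ
  · exact fun σ hσ => key p' p hp' hp σ hσ
  · intro σ _
    rw [Equiv.swap_comm p' p, mul_assoc, Equiv.swap_mul_self, mul_one]
  · intro σ _
    rw [Equiv.swap_comm p p', mul_assoc, Equiv.swap_mul_self, mul_one]

lemma B_card_mul (top m : Fin T) (hm : 0 < (m : ℕ)) {p : Fin T} (hp : p < m) :
    (m : ℕ) * (B top m p).card = (T - 1).factorial := by
  classical
  set f : Equiv.Perm (Fin T) → Fin T := fun σ =>
    if h : ∃ q, q < m ∧ ∀ j, j < m → j ≠ q → σ j < σ q then h.choose else m with hf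
  have hmem : ∀ σ ∈ univ.filter (fun σ : Equiv.Perm (Fin T) => σ m = top),
      f σ ∈ Finset.Iio m := by
    intro σ _
    have h := exists_argmax σ m hm
    simp only [hf, dif_pos h, Finset.mem_Iio]
    exact h.choose_spec.1
  have hsplit := Finset.card_eq_sum_card_fiberwise hmem
  rw [fiber_card m top] at hsplit
  have hB : ∀ q ∈ Finset.Iio m,
      ((univ.filter (fun σ : Equiv.Perm (Fin T) => σ m = top)).filter
        (fun σ => f σ = q)) = B top m q := by
    intro q hq
    rw [Finset.mem_Iio] at hq
    ext σ
    simp only [B, Finset.mem_filter, mem_univ, true_and, and_congr_right_iff]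
    intro _
    have h := exists_argmax σ m hm
    simp only [hf, dif_pos h]
    constructor
    · rintro rfl
      exact h.choose_spec.2
    · intro hmax
      exact argmax_unique h.choose_spec.1 hq h.choose_spec.2 hmax
  rw [Finset.sum_congr rfl (fun q hq => by rw [hB q hq])] at hsplit
  have hconst : ∀ q ∈ Finset.Iio m, (B top m q).card = (B top m p).card := by
    intro q hq
    exact B_card_eq top m (Finset.mem_Iio.mp hq) hp
  rw [Finset.sum_congr rfl hconst, Finset.sum_const, Fin.card_Iio, smul_eq_mul] at hsplit
  omega

end Sec

open Sec

/-- Classical secretary problem: with `T` candidates in uniformly random order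
(modeled as a uniformly random permutation `σ` giving the ranks), the cutoff-`k`
strategy (reject the first `k`, then accept the first candidate better than all
previous ones) wins with probability `(k/T) * ∑_{m=k+1}^{T} 1/(m-1)`. -/
theorem secretary_cutoff_win_prob (T k : ℕ) (hk : 1 ≤ k) (hkT : k < T) :
    ((Finset.univ.filter (fun σ : Equiv.Perm (Fin T) =>
        ∃ m : Fin T, k ≤ (m : ℕ) ∧ (∀ j : Fin T, j ≠ m → σ j < σ m) ∧
          (∀ j : Fin T, k ≤ (j : ℕ) → j < m → ∃ i : Fin T, i < j ∧ σ j < σ i))).card : ℝ)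
      / (Nat.factorial T : ℝ) =
    ((k : ℝ) / T) * ∑ m ∈ Finset.Icc (k + 1) T, 1 / ((m : ℝ) - 1) := by
  classical
  have hT : 0 < T := by omega
  set top : Fin T := ⟨T - 1, by omega⟩ with htop
  set M : Finset (Fin T) := univ.filter (fun m : Fin T => k ≤ (m : ℕ)) with hM
  set P : Finset (Fin T) := univ.filter (fun p : Fin T => (p : ℕ) < k) with hP
  -- Step 1: rewrite the event set as a double biUnion
  have hW : (Finset.univ.filter (fun σ : Equiv.Perm (Fin T) =>
        ∃ m : Fin T, k ≤ (m : ℕ) ∧ (∀ j : Fin T, j ≠ m → σ j < σ m) ∧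
          (∀ j : Fin T, k ≤ (j : ℕ) → j < m → ∃ i : Fin T, i < j ∧ σ j < σ i)))
      = M.biUnion (fun m => P.biUnion (fun p => B top m p)) := by
    ext σ
    simp only [Finset.mem_filter, Finset.mem_biUnion, mem_univ, true_and, hM, hP, B]
    constructor
    · rintro ⟨m, hkm, hmaxm, hrec⟩
      refine ⟨m, hkm, ?_⟩
      have hσm : σ m = top := by
        by_contra hne
        have hj0 : σ.symm top ≠ m := by
          intro h; apply hne; rw [← h]; simp
        have h1 : σ (σ.symm top) < σ m := hmaxm _ hj0
        rw [Equiv.apply_symm_apply] at h1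
        have := (σ m).isLt
        rw [Fin.lt_def] at h1
        simp only [htop] at h1
        omega
      obtain ⟨p, hpm, hpmax⟩ := exists_argmax σ m (by omega)
      have hpk : (p : ℕ) < k := by
        by_contra hpk
        push_neg at hpk
        obtain ⟨i, hip, hlt⟩ := hrec p hpk hpm
        exact absurd hlt (not_lt.mpr (le_of_lt (hpmax i (lt_trans hip hpm) (ne_of_lt hip))))
      exact ⟨p, hpk, hσm, hpmax⟩
    · rintro ⟨m, hkm, p, hpk, hσm, hpmax⟩
      refine ⟨m, hkm, ?_, ?_⟩
      · intro j hj
        have h1 : σ j ≠ σ m := fun h => hj (σ.injective h)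
        rw [hσm] at h1 ⊢
        have := (σ j).isLt
        rw [Fin.lt_def]
        simp only [htop]
        have : (σ j : ℕ) ≠ T - 1 := fun h => h1 (Fin.ext h)
        omega
      · intro j hkj hjm
        have hpj : p < j := by rw [Fin.lt_def]; omega
        exact ⟨p, hpj, hpmax j hjm (fun h => by rw [h] at hpj; exact absurd hpj (lt_irrefl _))⟩
  rw [hW]
  -- Step 2: cardinality via disjointness
  have hdisj_inner : ∀ m ∈ M, ∀ p ∈ P, ∀ p' ∈ P, p ≠ p' →
      Disjoint (B top m p) (B top m p') := by
    intro m hm p hp p' hp' hne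
    rw [Finset.disjoint_left]
    intro σ hσ hσ'
    simp only [B, Finset.mem_filter, mem_univ, true_and] at hσ hσ'
    simp only [hM, hP, Finset.mem_filter, mem_univ, true_and] at hm hp hp'
    have hpm : p < m := by rw [Fin.lt_def]; omega
    have hpm' : p' < m := by rw [Fin.lt_def]; omega
    exact hne (argmax_unique hpm hpm' hσ.2 hσ'.2)
  have hdisj_outer : ∀ m ∈ M, ∀ m' ∈ M, m ≠ m' →
      Disjoint (P.biUnion (fun p => B top m p)) (P.biUnion (fun p => B top m' p)) := by
    intro m _ m' _ hne
    rw [Finset.disjoint_left]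
    intro σ hσ hσ'
    simp only [Finset.mem_biUnion, B, Finset.mem_filter, mem_univ, true_and] at hσ hσ'
    obtain ⟨p, _, hσm, _⟩ := hσ
    obtain ⟨p', _, hσm', _⟩ := hσ'
    exact hne (σ.injective (hσm.trans hσm'.symm))
  rw [Finset.card_biUnion hdisj_outer]
  have hinner : ∀ m ∈ M, (P.biUnion (fun p => B top m p)).card
      = ∑ p ∈ P, (B top m p).card := fun m hm => Finset.card_biUnion (hdisj_inner m hm)
  rw [Finset.sum_congr rfl hinner]
  -- Step 3: compute in ℝ
  push_cast
  have hPcard : P.card = k := by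
    have : P = Finset.Iio (⟨k, hkT⟩ : Fin T) := by
      ext p; simp [hP, Fin.lt_def]
    rw [this, Fin.card_Iio]
  have hterm : ∀ m ∈ M, (∑ p ∈ P, ((B top m p).card : ℝ))
      = k * ((T - 1).factorial : ℝ) / (m : ℕ) := by
    intro m hm
    simp only [hM, Finset.mem_filter, mem_univ, true_and] at hm
    have hm0 : 0 < (m : ℕ) := by omega
    have hBc : ∀ p ∈ P, ((B top m p).card : ℝ) = ((T - 1).factorial : ℝ) / (m : ℕ) := by
      intro p hp
      simp only [hP, Finset.mem_filter, mem_univ, true_and] at hp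
      have hpm : p < m := by rw [Fin.lt_def]; omega
      have := B_card_mul top m hm0 hpm
      have hcast : ((m : ℕ) : ℝ) * ((B top m p).card : ℝ) = ((T - 1).factorial : ℝ) := by
        exact_mod_cast congrArg (Nat.cast : ℕ → ℝ) this
      field_simp
      linarith [hcast]
    rw [Finset.sum_congr rfl hBc, Finset.sum_const, hPcard, nsmul_eq_mul]
    ring
  rw [Finset.sum_congr rfl hterm]
  -- Step 4: sum manipulation
  have hfactT : (T.factorial : ℝ) = T * (T - 1).factorial := by
    cases T with
    | zero => omega
    | succ n => push_cast [Nat.factorial_succ]; ring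
  have hfact_pos : (0:ℝ) < ((T - 1).factorial : ℝ) := by positivity
  have hsum : ∑ m ∈ M, (k : ℝ) * ((T - 1).factorial : ℝ) / ((m : Fin T) : ℕ)
      = (k : ℝ) * ((T - 1).factorial : ℝ) * ∑ m ∈ M, 1 / (((m : Fin T) : ℕ) : ℝ) := by
    rw [Finset.mul_sum]
    apply Finset.sum_congr rfl
    intro m _
    ring
  rw [hsum]
  have hsumM : ∑ m ∈ M, 1 / (((m : Fin T) : ℕ) : ℝ)
      = ∑ n ∈ Finset.Ico k T, 1 / (n : ℝ) := by
    rw [hM, Finset.sum_filter]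
    rw [Fin.sum_univ_eq_sum_range (fun n => if k ≤ n then 1 / (n:ℝ) else 0) T]
    rw [← Finset.sum_filter]
    congr 1
    ext n
    simp [Finset.mem_Ico, and_comm]
  rw [hsumM]
  have hreindex : ∑ n ∈ Finset.Ico k T, 1 / (n : ℝ)
      = ∑ m ∈ Finset.Icc (k + 1) T, 1 / ((m : ℝ) - 1) := by
    apply Finset.sum_nbij' (fun n => n + 1) (fun n => n - 1)
    · intro a ha; rw [Finset.mem_Ico] at ha; rw [Finset.mem_Icc]; omega
    · intro a ha; rw [Finset.mem_Icc] at ha; rw [Finset.mem_Ico]; omega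
    · intro a ha; omega
    · intro a ha; rw [Finset.mem_Icc] at ha; omega
    · intro a ha
      congr 1
      push_cast
      ring
  rw [hreindex]
  rw [hfactT]
  have hT' : ((T:ℝ)) ≠ 0 := by positivity
  field_simp
end

section
/- For each fixed T ≥ 1 and 1 ≤ k < T, the integral identity \int_0^1 k x^{k-1} \sum_{m=k+1}^T x^{m-k-1} ((1 - x^{T-m+1})/(T-m+1)) dx = (k/T) \sum_{m=k+1}^T 1/(m-1) holds. -/
open Finset

/-- The integral identity reducing the secretary-problem win probability
(values i.i.d. uniform on [0,1], cutoff-`k` strategy) to the classical formula. -/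
theorem secretary_integral_identity (T k : ℕ) (hT : 1 ≤ T) (hk : 1 ≤ k) (hkT : k < T) :
    (∫ x in (0:ℝ)..1, (k : ℝ) * x ^ (k - 1) *
        ∑ m ∈ Finset.Icc (k + 1) T,
          x ^ (m - k - 1) * ((1 - x ^ (T - m + 1)) / ((T - m + 1 : ℕ) : ℝ))) =
    ((k : ℝ) / T) * ∑ m ∈ Finset.Icc (k + 1) T, 1 / ((m : ℝ) - 1) := by
  have h1 : ∀ x : ℝ, (k : ℝ) * x ^ (k - 1) *
      ∑ m ∈ Finset.Icc (k + 1) T,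
        x ^ (m - k - 1) * ((1 - x ^ (T - m + 1)) / ((T - m + 1 : ℕ) : ℝ)) =
      ∑ m ∈ Finset.Icc (k + 1) T,
        ((k : ℝ) / ((T - m + 1 : ℕ) : ℝ)) * (x ^ (m - 2) - x ^ (T - 1)) := by
    intro x
    rw [Finset.mul_sum]
    refine Finset.sum_congr rfl fun m hm => ?_
    simp only [mem_Icc] at hm
    have e1 : (k - 1) + (m - k - 1) = m - 2 := by omega
    have e2 : (m - 2) + (T - m + 1) = T - 1 := by omega
    have p1 : x ^ (m - 2) = x ^ (k - 1) * x ^ (m - k - 1) := by rw [← pow_add, e1]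
    have p2 : x ^ (T - 1) = x ^ (k - 1) * x ^ (m - k - 1) * x ^ (T - m + 1) := by
      rw [← pow_add, ← pow_add]
      congr 1
      omega
    rw [p1, p2]
    ring
  simp only [h1]
  rw [intervalIntegral.integral_finset_sum, Finset.mul_sum]
  · refine Finset.sum_congr rfl fun m hm => ?_
    simp only [mem_Icc] at hm
    rw [intervalIntegral.integral_const_mul,
      intervalIntegral.integral_sub (intervalIntegral.intervalIntegrable_pow _)
        (intervalIntegral.intervalIntegrable_pow _), integral_pow, integral_pow]
    have d1 : ((m - 2 : ℕ) : ℝ) + 1 = (m : ℝ) - 1 := by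
      push_cast [Nat.cast_sub (by omega : 2 ≤ m)]; ring
    have d2 : ((T - 1 : ℕ) : ℝ) + 1 = (T : ℝ) := by
      push_cast [Nat.cast_sub (by omega : 1 ≤ T)]; ring
    have c2 : ((T - m + 1 : ℕ) : ℝ) = (T : ℝ) - m + 1 := by
      push_cast [Nat.cast_sub (by omega : m ≤ T)]; ring
    rw [d1, d2, c2]
    norm_num
    have h2 : (T : ℝ) ≠ 0 := by positivity
    have h3 : (m : ℝ) - 1 ≠ 0 := by
      have : (2 : ℝ) ≤ m := by exact_mod_cast (by omega : 2 ≤ m)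
      linarith
    have h4 : (T : ℝ) - m + 1 ≠ 0 := by
      have : (m : ℝ) ≤ T := by exact_mod_cast hm.2
      linarith
    field_simp
    ring
  · intro m _
    exact ((intervalIntegral.intervalIntegrable_pow _).sub
      (intervalIntegral.intervalIntegrable_pow _)).const_mul _
end

section
/- For each integer t ≥ 2, the equation z^{t-1} = \sum_{j=1}^{t-1} (z^{j-1} - z^{t-1})/(t-j) has a unique solution z_t in the open interval (0,1). -/
open Finset

noncomputable def gfun (t : ℕ) (z : ℝ) : ℝ :=
  ∑ j ∈ Finset.Icc 1 (t - 1), ((z ^ (t - j))⁻¹ - 1) / ((t - j : ℕ) : ℝ)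

lemma sum_eq_gfun (t : ℕ) (z : ℝ) (hz : z ≠ 0) :
    ∑ j ∈ Finset.Icc 1 (t - 1), (z ^ (j - 1) - z ^ (t - 1)) / ((t - j : ℕ) : ℝ)
      = z ^ (t - 1) * gfun t z := by
  rw [gfun, Finset.mul_sum]
  apply Finset.sum_congr rfl
  intro j hj
  simp only [Finset.mem_Icc] at hj
  have h1 : j - 1 + (t - j) = t - 1 := by omega
  have h2 : z ^ (t - 1) = z ^ (j - 1) * z ^ (t - j) := by rw [← pow_add, h1]
  have hzp : z ^ (t - j) ≠ 0 := pow_ne_zero _ hz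
  rw [h2, ← mul_div_assoc, mul_sub, mul_one]
  congr 2
  rw [mul_assoc, mul_inv_cancel₀ hzp, mul_one]

lemma gfun_strict (t : ℕ) (ht : 2 ≤ t) {x y : ℝ} (hx : 0 < x) (hxy : x < y) :
    gfun t y < gfun t x := by
  apply Finset.sum_lt_sum_of_nonempty
  · exact Finset.nonempty_Icc.2 (by omega)
  · intro j hj
    simp only [Finset.mem_Icc] at hj
    have hxk : 0 < x ^ (t - j) := pow_pos hx _
    have hlt : x ^ (t - j) < y ^ (t - j) :=
      pow_lt_pow_left₀ hxy hx.le (by omega)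
    have hinv : (y ^ (t - j))⁻¹ < (x ^ (t - j))⁻¹ := by
      apply inv_strictAnti₀ hxk hlt
    have hc : (0:ℝ) < ((t - j : ℕ) : ℝ) := by
      exact_mod_cast Nat.pos_of_ne_zero (by omega)
    have := sub_lt_sub_right hinv 1
    exact div_lt_div_of_pos_right this hc

lemma gfun_one (t : ℕ) : gfun t 1 = 0 := by
  simp [gfun]

lemma gfun_half (t : ℕ) (ht : 2 ≤ t) : 1 ≤ gfun t (1/2 : ℝ) := by
  have hmem : t - 1 ∈ Finset.Icc 1 (t - 1) := Finset.mem_Icc.2 ⟨by omega, le_refl _⟩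
  have hterm : (((1/2:ℝ) ^ (t - (t-1)))⁻¹ - 1) / ((t - (t-1) : ℕ) : ℝ) = 1 := by
    have : t - (t - 1) = 1 := by omega
    rw [this]; norm_num
  calc (1:ℝ) = (((1/2:ℝ) ^ (t - (t-1)))⁻¹ - 1) / ((t - (t-1) : ℕ) : ℝ) := hterm.symm
    _ ≤ gfun t (1/2 : ℝ) := by
        rw [gfun]
        apply Finset.single_le_sum (f := fun j => (((1/2:ℝ) ^ (t - j))⁻¹ - 1) / ((t - j : ℕ) : ℝ)) _ hmem
        intro j hj
        simp only [Finset.mem_Icc] at hj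
        have h1 : ((1/2:ℝ) ^ (t - j)) ≤ 1 :=
          pow_le_one₀ (by norm_num) (by norm_num)
        have h2 : (0:ℝ) < (1/2:ℝ) ^ (t - j) := pow_pos (by norm_num) _
        have h3 : (1:ℝ) ≤ ((1/2:ℝ) ^ (t - j))⁻¹ := by rw [le_inv_comm₀ one_pos h2]; simpa using h1
        exact div_nonneg (by linarith) (Nat.cast_nonneg _)

lemma gfun_contOn (t : ℕ) : ContinuousOn (gfun t) (Set.Icc (1/2 : ℝ) 1) := by
  apply continuousOn_finset_sum
  intro j hj
  apply ContinuousOn.div_const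
  apply ContinuousOn.sub _ continuousOn_const
  apply ContinuousOn.inv₀ ((continuous_pow _).continuousOn)
  intro x hx
  have hx0 : (0:ℝ) < x := lt_of_lt_of_le (by norm_num) hx.1
  exact pow_ne_zero _ hx0.ne'

lemma eq_iff_gfun (t : ℕ) (z : ℝ) (hz : z ≠ 0) :
    (z ^ (t - 1) =
        ∑ j ∈ Finset.Icc 1 (t - 1), (z ^ (j - 1) - z ^ (t - 1)) / ((t - j : ℕ) : ℝ))
      ↔ gfun t z = 1 := by
  rw [sum_eq_gfun t z hz]
  have hzp : z ^ (t - 1) ≠ 0 := pow_ne_zero _ hz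
  constructor
  · intro h
    have : z ^ (t - 1) * 1 = z ^ (t - 1) * gfun t z := by rw [mul_one]; exact h
    exact (mul_left_cancel₀ hzp this).symm
  · intro h; rw [h, mul_one]

/-- For each `t ≥ 2` the critical-value equation
`z^{t-1} = ∑_{j=1}^{t-1} (z^{j-1} - z^{t-1})/(t-j)` has a unique solution in `(0,1)`. -/
theorem critical_value_exists_unique (t : ℕ) (ht : 2 ≤ t) :
    ∃! z : ℝ, z ∈ Set.Ioo (0:ℝ) 1 ∧
      z ^ (t - 1) =
        ∑ j ∈ Finset.Icc 1 (t - 1), (z ^ (j - 1) - z ^ (t - 1)) / ((t - j : ℕ) : ℝ) := by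
  have hsub : Set.Icc (gfun t 1) (gfun t (1/2:ℝ)) ⊆ gfun t '' Set.Icc (1/2:ℝ) 1 :=
    intermediate_value_Icc' (by norm_num) (gfun_contOn t)
  have h1mem : (1:ℝ) ∈ Set.Icc (gfun t 1) (gfun t (1/2:ℝ)) := by
    rw [gfun_one]
    exact ⟨by norm_num, gfun_half t ht⟩
  obtain ⟨z, hzmem, hgz⟩ := hsub h1mem
  have hz0 : (0:ℝ) < z := lt_of_lt_of_le (by norm_num) hzmem.1
  have hz1 : z < 1 := by
    rcases lt_or_eq_of_le hzmem.2 with h | h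
    · exact h
    · exfalso; rw [h, gfun_one] at hgz; norm_num at hgz
  refine ⟨z, ⟨⟨hz0, hz1⟩, (eq_iff_gfun t z hz0.ne').2 hgz⟩, ?_⟩
  rintro w ⟨⟨hw0, hw1⟩, hweq⟩
  have hgw : gfun t w = 1 := (eq_iff_gfun t w hw0.ne').1 hweq
  by_contra hne
  rcases lt_or_gt_of_ne hne with h | h
  · have := gfun_strict t ht hw0 h
    rw [hgw, hgz] at this; exact lt_irrefl _ this
  · have := gfun_strict t ht hz0 h
    rw [hgw, hgz] at this; exact lt_irrefl _ this
end
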